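/- The number of permutations of {1,...,n} (in the full symmetric group) possessing no cycle of length k in their disjoint cycle decomposition is n! · Σ_{s=0}^{⌊n/k⌋} (−1/k)^s / s!. -/

import Mathlib

open Equiv Function Finset
open Fin.NatCast

variable {k : ℕ}

/-- The set of permutations with no k-cycle, as a Finset. -/
private noncomputable def noK (k : ℕ) (α : Type*) [Fintype α] [DecidableEq α] : Finset (Perm α) :=
  Finset.univ.filter (fun π => ∀ x, Function.minimalPeriod (⇑π) x ≠ k)

private lemma isPeriodic_perm {α : Type*} [Fintype α] (π : Perm α) (x : α) :
    IsPeriodicPt (⇑π) (orderOf π) x := by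
  unfold IsPeriodicPt IsFixedPt
  rw [Perm.iterate_eq_pow, pow_orderOf_eq_one]; rfl

private lemma minPeriod_pos {α : Type*} [Fintype α] (π : Perm α) (x : α) :
    0 < Function.minimalPeriod (⇑π) x :=
  (isPeriodic_perm π x).minimalPeriod_pos (orderOf_pos π)

private lemma minPeriod_le_card {α : Type*} [Fintype α] (π : Perm α) (x : α) :
    Function.minimalPeriod (⇑π) x ≤ Fintype.card α := by
  classical
  have h := Function.iterate_injOn_Iio_minimalPeriod (f := ⇑π) (x := x)
  have : (Finset.Iio (Function.minimalPeriod (⇑π) x)).card ≤ (Finset.univ : Finset α).card :=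
    Finset.card_le_card_of_injOn (fun n => (⇑π)^[n] x) (fun a _ => Finset.mem_univ _)
      (fun a ha b hb hab => h (by simpa using ha) (by simpa using hb) hab)
  simpa using this

/-- minimal period is preserved under conjugation by an equiv. -/
private lemma minPeriod_conj {α β : Type*} (e : α ≃ β) (π : Perm α) (x : α) :
    Function.minimalPeriod (⇑((e.symm.trans π).trans e : Perm β)) (e x)
      = Function.minimalPeriod (⇑π) x := by
  apply Function.minimalPeriod_eq_minimalPeriod_iff.2
  intro n
  have key : ∀ m : ℕ, (((e.symm.trans π).trans e : Perm β) ^ m) = (e.symm.trans (π ^ m)).trans e := by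
    intro m
    induction m with
    | zero => ext b; simp
    | succ m ih => ext b; simp [pow_succ, ih, Perm.mul_apply]
  unfold IsPeriodicPt IsFixedPt
  rw [Perm.iterate_eq_pow, Perm.iterate_eq_pow, key]
  simp only [trans_apply, symm_apply_apply]
  exact ⟨fun h => by simpa using congrArg e.symm h, fun h => by rw [h]⟩

/-- noK card only depends on the cardinality. -/
private lemma noK_card_congr {α β : Type*} [Fintype α] [DecidableEq α] [Fintype β] [DecidableEq β]
    (e : α ≃ β) : (noK k α).card = (noK k β).card := by
  apply Finset.card_bij (fun π _ => (e.symm.trans π).trans e)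
  · intro π hπ
    simp only [noK, Finset.mem_filter, Finset.mem_univ, true_and] at hπ ⊢
    intro y
    have := minPeriod_conj e π (e.symm y)
    rw [e.apply_symm_apply] at this
    rw [this]; exact hπ _
  · intro π₁ h₁ π₂ h₂ h
    ext x
    have := congrArg (fun σ : Perm β => e.symm (σ (e x))) h
    simpa using this
  · intro σ hσ
    refine ⟨(e.trans σ).trans e.symm, ?_, ?_⟩
    · simp only [noK, Finset.mem_filter, Finset.mem_univ, true_and] at hσ ⊢
      intro x
      have := minPeriod_conj e.symm σ (e x)
      simp only [Equiv.symm_symm, e.symm_apply_apply] at this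
      rw [show ((e.trans σ).trans e.symm : Perm α) = ((e.symm.symm.trans σ).trans e.symm : Perm α) by simp] at *
      rw [this]; exact hσ _
    · ext b; simp

private noncomputable def aa (k n : ℕ) : ℕ := (noK k (Fin n)).card

/-- minimal period of finRotate. -/
private lemma finRotate_pow_apply (m j : ℕ) (i : Fin (m+1)) :
    ((finRotate (m+1)) ^ j) i = i + (j : Fin (m+1)) := by
  induction j with
  | zero => simp
  | succ j ih =>
    rw [pow_succ', Perm.mul_apply, finRotate_succ_apply, Nat.cast_add, Nat.cast_one, ih, add_assoc]

private lemma isPeriodicPt_finRotate_iff (m j : ℕ) (i : Fin (m+1)) :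
    IsPeriodicPt (⇑(finRotate (m+1))) j i ↔ (m+1) ∣ j := by
  unfold IsPeriodicPt IsFixedPt
  rw [Perm.iterate_eq_pow, finRotate_pow_apply, add_eq_left, Fin.natCast_eq_zero]

private lemma minPeriod_finRotate (m : ℕ) (i : Fin (m+1)) :
    Function.minimalPeriod (⇑(finRotate (m+1))) i = m + 1 := by
  apply Nat.dvd_antisymm
  · exact Function.IsPeriodicPt.minimalPeriod_dvd ((isPeriodicPt_finRotate_iff m (m+1) i).2 dvd_rfl)
  · exact (isPeriodicPt_finRotate_iff m _ i).1 (Function.isPeriodicPt_minimalPeriod _ _)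

/-- Count of permutations acting as the given cycle `f` on its image and having no k-cycle. -/
private lemma T_card (n ℓ' : ℕ) (hℓk : ℓ' + 1 ≠ k) (f : Fin (ℓ'+1) → Fin (n+1))
    (hf : Function.Injective f) :
    (Finset.univ.filter (fun π : Perm (Fin (n+1)) =>
      (∀ x, Function.minimalPeriod (⇑π) x ≠ k) ∧ ∀ i, π (f i) = f (i+1))).card
      = aa k (n - ℓ') := by
  classical
  set S : Finset (Fin (n+1)) := Finset.univ.image f with hS
  have hmemS : ∀ i, f i ∈ S := fun i => Finset.mem_image_of_mem f (Finset.mem_univ i)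
  have hSmem : ∀ y ∈ S, ∃ i, f i = y := by
    intro y hy
    rcases Finset.mem_image.1 hy with ⟨i, _, hi⟩
    exact ⟨i, hi⟩
  have hcard1 : Fintype.card {y // y ∈ S} = ℓ'+1 := by
    simp only [Fintype.card_coe, hS]
    rw [Finset.card_image_of_injective _ hf, Finset.card_univ, Fintype.card_fin]
  have hbij : Function.Bijective (fun i : Fin (ℓ'+1) => (⟨f i, hmemS i⟩ : {y // y ∈ S})) := by
    rw [Fintype.bijective_iff_injective_and_card]
    exact ⟨fun a b h => hf (congrArg Subtype.val h), by rw [hcard1, Fintype.card_fin]⟩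
  set f' : Fin (ℓ'+1) ≃ {y // y ∈ S} := Equiv.ofBijective _ hbij with hf'
  have hf'app : ∀ i, f' i = ⟨f i, hmemS i⟩ := fun i => rfl
  have hf'symm : ∀ (i) (h : f i ∈ S), f'.symm ⟨f i, h⟩ = i := by
    intro i h
    rw [Equiv.symm_apply_eq, hf'app]
  set c : Perm (Fin (n+1)) := (finRotate (ℓ'+1)).extendDomain f' with hc
  have hcpow : ∀ (m : ℕ) (i : Fin (ℓ'+1)), (c ^ m) (f i) = f (((finRotate (ℓ'+1)) ^ m) i) := by
    intro m i
    have e1 : c ^ m = ((finRotate (ℓ'+1)) ^ m).extendDomain f' := by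
      rw [hc, Perm.extendDomain_pow]
    rw [e1, Perm.extendDomain_apply_subtype _ f' (hmemS i), hf'symm, hf'app]
  have hcfix : ∀ (m : ℕ) (y : Fin (n+1)), y ∉ S → (c ^ m) y = y := by
    intro m y hy
    have e1 : c ^ m = ((finRotate (ℓ'+1)) ^ m).extendDomain f' := by
      rw [hc, Perm.extendDomain_pow]
    rw [e1]
    exact Perm.extendDomain_apply_not_subtype _ f' hy
  have hc1 : ∀ i, c (f i) = f (i + 1) := by
    intro i
    have := hcpow 1 i
    simpa [finRotate_succ_apply] using this
  have haux : ∀ (π : Perm (Fin (n+1))), (∀ i, π (f i) = f (i+1)) → ∀ y, (y ∈ S ↔ π y ∈ S) := by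
    intro π hcyc y
    constructor
    · intro hy
      rcases hSmem y hy with ⟨i, rfl⟩
      rw [hcyc]
      exact hmemS _
    · intro hy
      rcases hSmem _ hy with ⟨j, hj⟩
      have h2 : π (f (j - 1)) = f j := by rw [hcyc]; congr 1; exact sub_add_cancel j 1
      rw [← h2] at hj
      have h3 := π.injective hj
      rw [← h3]
      exact hmemS _
  -- facts about the backward map
  have hdfix : ∀ (σ : Perm {y : Fin (n+1) // y ∉ S}) (m : ℕ) (y : Fin (n+1)), y ∈ S →
      ((Perm.ofSubtype σ : Perm (Fin (n+1))) ^ m) y = y := by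
    intro σ m y hy
    rw [← map_pow]
    exact Perm.ofSubtype_apply_of_not_mem (p := fun y => y ∉ S) _ (not_not_intro hy)
  have hdmove : ∀ (σ : Perm {y : Fin (n+1) // y ∉ S}) (m : ℕ) (y : Fin (n+1)) (hy : y ∉ S),
      ((Perm.ofSubtype σ : Perm (Fin (n+1))) ^ m) y = ↑((σ ^ m) ⟨y, hy⟩) := by
    intro σ m y hy
    rw [← map_pow]
    exact Perm.ofSubtype_apply_of_mem (p := fun y => y ∉ S) (σ ^ m) hy
  have hcomm : ∀ (σ : Perm {y : Fin (n+1) // y ∉ S}), Commute c (Perm.ofSubtype σ) := by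
    intro σ
    apply Equiv.Perm.Disjoint.commute
    intro x
    by_cases hx : x ∈ S
    · right
      exact Perm.ofSubtype_apply_of_not_mem (p := fun y => y ∉ S) _ (not_not_intro hx)
    · left
      simpa using hcfix 1 x hx
  have hjpow_mem : ∀ (σ : Perm {y : Fin (n+1) // y ∉ S}) (m : ℕ) (i : Fin (ℓ'+1)),
      ((c * Perm.ofSubtype σ) ^ m) (f i) = f (((finRotate (ℓ'+1)) ^ m) i) := by
    intro σ m i
    rw [(hcomm σ).mul_pow, Perm.mul_apply, hdfix σ m _ (hmemS i), hcpow]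
  have hjpow_not : ∀ (σ : Perm {y : Fin (n+1) // y ∉ S}) (m : ℕ) (y : Fin (n+1)) (hy : y ∉ S),
      ((c * Perm.ofSubtype σ) ^ m) y = ↑((σ ^ m) ⟨y, hy⟩) := by
    intro σ m y hy
    rw [(hcomm σ).mul_pow, Perm.mul_apply, hdmove σ m y hy]
    exact hcfix m _ ((σ ^ m) ⟨y, hy⟩).2
  -- rewrite target cardinality
  have hcompl : Fintype.card {y : Fin (n+1) // y ∉ S} = n - ℓ' := by
    rw [Fintype.card_subtype_compl, hcard1, Fintype.card_fin]
    omega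
  rw [aa, ← noK_card_congr (Fintype.equivFinOfCardEq hcompl)]
  -- the bijection
  refine Finset.card_bij'
    (fun π hπ => π.subtypePerm (fun y =>
      (not_iff_not.2 (haux π (Finset.mem_filter.1 hπ).2.2 y)).symm))
    (fun σ _ => c * Perm.ofSubtype σ) ?_ ?_ ?_ ?_
  · -- i maps into noK
    intro π hπ
    simp only [noK, Finset.mem_filter, Finset.mem_univ, true_and]
    intro y
    have hmp : Function.minimalPeriod
        (⇑(π.subtypePerm (fun y => (not_iff_not.2 (haux π (Finset.mem_filter.1 hπ).2.2 y)).symm))) y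
        = Function.minimalPeriod (⇑π) (y : Fin (n+1)) := by
      apply Function.minimalPeriod_eq_minimalPeriod_iff.2
      intro m
      unfold Function.IsPeriodicPt Function.IsFixedPt
      rw [Perm.iterate_eq_pow, Perm.iterate_eq_pow, Perm.subtypePerm_pow, Perm.subtypePerm_apply,
        Subtype.ext_iff]
    rw [hmp]
    exact (Finset.mem_filter.1 hπ).2.1 _
  · -- j maps into T
    intro σ hσ
    simp only [Finset.mem_filter, Finset.mem_univ, true_and]
    constructor
    · intro x
      by_cases hx : x ∈ S
      · rcases hSmem x hx with ⟨i, rfl⟩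
        have hmp : Function.minimalPeriod (⇑(c * Perm.ofSubtype σ)) (f i)
            = Function.minimalPeriod (⇑(finRotate (ℓ'+1))) i := by
          apply Function.minimalPeriod_eq_minimalPeriod_iff.2
          intro m
          unfold Function.IsPeriodicPt Function.IsFixedPt
          rw [Perm.iterate_eq_pow, Perm.iterate_eq_pow, hjpow_mem, hf.eq_iff]
        rw [hmp, minPeriod_finRotate]
        exact hℓk
      · have hmp : Function.minimalPeriod (⇑(c * Perm.ofSubtype σ)) x
            = Function.minimalPeriod (⇑σ) ⟨x, hx⟩ := by
          apply Function.minimalPeriod_eq_minimalPeriod_iff.2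
          intro m
          unfold Function.IsPeriodicPt Function.IsFixedPt
          rw [Perm.iterate_eq_pow, Perm.iterate_eq_pow, hjpow_not σ m x hx]
          constructor
          · intro h
            exact Subtype.ext h
          · intro h
            rw [h]
        rw [hmp]
        simp only [noK, Finset.mem_filter, Finset.mem_univ, true_and] at hσ
        exact hσ _
    · intro i
      rw [Perm.mul_apply, Perm.ofSubtype_apply_of_not_mem (p := fun y => y ∉ S) _ (not_not_intro (hmemS i)), hc1]
  · -- left inverse
    intro π hπ
    have hcyc := (Finset.mem_filter.1 hπ).2.2
    ext x
    by_cases hx : x ∈ S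
    · rw [Perm.mul_apply, Perm.ofSubtype_apply_of_not_mem (p := fun y => y ∉ S) _ (not_not_intro hx)]
      rcases hSmem x hx with ⟨i, rfl⟩
      rw [hc1, hcyc]
    · rw [Perm.mul_apply, Perm.ofSubtype_apply_of_mem (p := fun y => y ∉ S) _ hx, Perm.subtypePerm_apply]
      have hπx : π x ∉ S := fun h => hx ((haux π hcyc x).2 h)
      have h5 := hcfix 1 (π x) hπx
      simp only [pow_one] at h5
      simp [h5]
  · -- right inverse
    intro σ hσ
    ext y
    have h5 := hjpow_not σ 1 (y : Fin (n+1)) y.2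
    simp only [pow_one] at h5
    simp only [Perm.subtypePerm_apply, h5, Subtype.coe_eta]

/-- number of injections sending 0 to 0. -/
private lemma F_card (n ℓ' : ℕ) :
    (Finset.univ.filter (fun f : Fin (ℓ'+1) → Fin (n+1) =>
      Function.Injective f ∧ f 0 = 0)).card = n.descFactorial ℓ' := by
  classical
  rw [← Fintype.card_subtype]
  have E : {f : Fin (ℓ'+1) → Fin (n+1) // Function.Injective f ∧ f 0 = 0}
      ≃ (Fin ℓ' ↪ {y : Fin (n+1) // y ≠ 0}) :=
  { toFun := fun fh => ⟨fun i => ⟨fh.1 i.succ,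
        fun hc => Fin.succ_ne_zero i (fh.2.1 (hc.trans fh.2.2.symm))⟩,
      fun a b hab => Fin.succ_injective _ (fh.2.1 (congrArg Subtype.val hab))⟩,
    invFun := fun g => ⟨fun i => Fin.cases (0 : Fin (n+1)) (fun j => (g j).1) i, by
      constructor
      · intro a b hab
        induction a using Fin.cases with
        | zero => induction b using Fin.cases with
          | zero => rfl
          | succ j =>
            simp only [Fin.cases_zero, Fin.cases_succ] at hab
            exact absurd hab.symm (g j).2
        | succ i => induction b using Fin.cases with
          | zero =>
            simp only [Fin.cases_zero, Fin.cases_succ] at hab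
            exact absurd hab (g i).2
          | succ j =>
            simp only [Fin.cases_succ] at hab
            exact congrArg Fin.succ (g.injective (Subtype.ext hab))
      · rfl⟩,
    left_inv := by
      intro fh
      apply Subtype.ext
      funext i
      induction i using Fin.cases with
      | zero => simp [fh.2.2]
      | succ j => rfl
    right_inv := by
      intro g
      ext i
      simp }
  rw [Fintype.card_congr E, Fintype.card_embedding_eq, Fintype.card_fin]
  congr 1
  have h1 : Fintype.card {y : Fin (n+1) // y = 0} = 1 := Fintype.card_subtype_eq (0 : Fin (n+1))
  have := Fintype.card_subtype_compl (fun y : Fin (n+1) => y = 0)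
  rw [h1, Fintype.card_fin] at this
  rw [this]
  omega

/-- Core recurrence. -/
private lemma rec_lemma (n : ℕ) (hk : 1 ≤ k) :
    aa k (n+1) = ∑ ℓ ∈ Finset.Icc 1 (n+1),
      if ℓ = k then 0 else n.descFactorial (ℓ-1) * aa k (n+1-ℓ) := by
  classical
  have h0 : aa k (n+1) = (Finset.univ.filter
      (fun π : Perm (Fin (n+1)) => ∀ x, Function.minimalPeriod (⇑π) x ≠ k)).card := by
    rw [aa, noK]
    congr 1
    ext π
    simp [Finset.mem_filter]
  rw [h0]
  rw [Finset.card_eq_sum_card_fiberwise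
    (f := fun π : Perm (Fin (n+1)) => Function.minimalPeriod (⇑π) 0)
    (t := Finset.Icc 1 (n+1)) (fun π _ => by
      rw [Finset.mem_coe, Finset.mem_Icc]
      exact ⟨minPeriod_pos π 0, le_trans (minPeriod_le_card π 0) (by simp)⟩)]
  apply Finset.sum_congr rfl
  intro ℓ hℓ
  rw [Finset.mem_Icc] at hℓ
  by_cases hlk : ℓ = k
  · rw [if_pos hlk, Finset.card_eq_zero, Finset.eq_empty_iff_forall_notMem]
    intro π hπ
    simp only [Finset.mem_filter, Finset.mem_univ, true_and] at hπ
    exact hπ.1 0 (hlk ▸ hπ.2)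
  · rw [if_neg hlk]
    obtain ⟨ℓ', rfl⟩ : ∃ ℓ', ℓ = ℓ' + 1 := ⟨ℓ - 1, by omega⟩
    rw [Finset.card_eq_sum_card_fiberwise
      (f := fun π : Perm (Fin (n+1)) => (fun i : Fin (ℓ'+1) => (⇑π)^[(i : ℕ)] (0 : Fin (n+1))))
      (t := Finset.univ.filter (fun f : Fin (ℓ'+1) → Fin (n+1) =>
        Function.Injective f ∧ f 0 = 0))
      (fun π hπ => by
        rw [Finset.mem_coe, Finset.mem_filter] at hπ
        have hmin : Function.minimalPeriod (⇑π) (0 : Fin (n+1)) = ℓ'+1 := hπ.2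
        rw [Finset.mem_coe, Finset.mem_filter]
        refine ⟨Finset.mem_univ _, ?_, rfl⟩
        intro a b hab
        exact Fin.ext (Function.iterate_injOn_Iio_minimalPeriod
          (by rw [hmin]; exact a.isLt) (by rw [hmin]; exact b.isLt) hab))]
    have hinner : ∀ f ∈ Finset.univ.filter (fun f : Fin (ℓ'+1) → Fin (n+1) =>
        Function.Injective f ∧ f 0 = 0),
        ((Finset.filter (fun π : Perm (Fin (n+1)) => Function.minimalPeriod (⇑π) 0 = ℓ'+1)
          (Finset.univ.filter (fun π : Perm (Fin (n+1)) =>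
            ∀ x, Function.minimalPeriod (⇑π) x ≠ k))).filter
          (fun π : Perm (Fin (n+1)) =>
            (fun i : Fin (ℓ'+1) => (⇑π)^[(i : ℕ)] (0 : Fin (n+1))) = f)).card
        = aa k (n - ℓ') := by
      intro f hf
      rw [Finset.mem_filter] at hf
      obtain ⟨-, hfinj, hf0⟩ := hf
      rw [← T_card n ℓ' hlk f hfinj]
      congr 1
      ext π
      simp only [Finset.mem_filter, Finset.mem_univ, true_and]
      constructor
      · rintro ⟨⟨hnoK, hmin⟩, horb⟩
        refine ⟨hnoK, ?_⟩
        intro i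
        have hfi : ∀ j : Fin (ℓ'+1), f j = (⇑π)^[(j : ℕ)] 0 := fun j => (congrFun horb j).symm
        by_cases hi : i = Fin.last ℓ'
        · subst hi
          rw [hfi (Fin.last ℓ'), ← Function.iterate_succ_apply' (⇑π)]
          have h1 : (Fin.last ℓ' : Fin (ℓ'+1)) + 1 = 0 := by
            rw [Fin.last_add_one]
          rw [h1, hf0]
          have h2 : ((Fin.last ℓ' : Fin (ℓ'+1)) : ℕ).succ = ℓ' + 1 := by simp
          rw [h2, ← hmin]
          exact Function.iterate_minimalPeriod
        · rw [hfi i, ← Function.iterate_succ_apply' (⇑π), hfi (i+1)]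
          congr 1
          rw [Fin.val_add_one]
          simp [hi]
      · rintro ⟨hnoK, hcyc⟩
        have claim1 : ∀ m : ℕ, (⇑π)^[m] (0 : Fin (n+1)) = f ((m : Fin (ℓ'+1))) := by
          intro m
          induction m with
          | zero => simp [hf0]
          | succ m ih =>
            rw [Function.iterate_succ_apply', ih, hcyc, Nat.cast_add, Nat.cast_one]
        have hper : Function.IsPeriodicPt (⇑π) (ℓ'+1) (0 : Fin (n+1)) := by
          unfold Function.IsPeriodicPt Function.IsFixedPt
          rw [claim1 (ℓ'+1)]
          rw [show ((ℓ'+1 : ℕ) : Fin (ℓ'+1)) = 0 by exact_mod_cast Fin.natCast_self (ℓ'+1)]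
          exact hf0
        have hpos : 0 < Function.minimalPeriod (⇑π) (0 : Fin (n+1)) :=
          hper.minimalPeriod_pos (by omega)
        have hle : Function.minimalPeriod (⇑π) (0 : Fin (n+1)) ≤ ℓ'+1 :=
          hper.minimalPeriod_le (by omega)
        have hmin : Function.minimalPeriod (⇑π) (0 : Fin (n+1)) = ℓ'+1 := by
          by_contra hne
          set m := Function.minimalPeriod (⇑π) (0 : Fin (n+1)) with hm
          have hlt : m < ℓ'+1 := lt_of_le_of_ne hle hne
          have h2 : (⇑π)^[m] (0 : Fin (n+1)) = 0 := Function.iterate_minimalPeriod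
          rw [claim1 m] at h2
          have h3 : ((m : Fin (ℓ'+1))) = 0 := hfinj (h2.trans hf0.symm)
          have h4 : (ℓ'+1) ∣ m := (Fin.natCast_eq_zero).1 h3
          have := Nat.le_of_dvd hpos h4
          omega
        refine ⟨⟨hnoK, hmin⟩, ?_⟩
        funext i
        show (⇑π)^[(i : ℕ)] 0 = f i
        rw [claim1 (i : ℕ), Fin.cast_val_eq_self]
    rw [Finset.sum_congr rfl hinner, Finset.sum_const, F_card n ℓ', smul_eq_mul,
      show ℓ' + 1 - 1 = ℓ' by omega, show n + 1 - (ℓ' + 1) = n - ℓ' by omega]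

private noncomputable def B (k m : ℕ) : ℚ :=
  ∑ s ∈ Finset.range (m / k + 1), (-(1:ℚ)/k) ^ s / (s.factorial : ℚ)

private lemma B_succ (m : ℕ) (hk : 1 ≤ k) :
    B k (m+1) = B k m + if k ∣ (m+1) then (-(1:ℚ)/k) ^ ((m+1)/k) / (((m+1)/k).factorial : ℚ) else 0 := by
  unfold B
  by_cases h : k ∣ (m+1)
  · rw [if_pos h]
    have hdiv : (m+1)/k = m/k + 1 := by rw [Nat.succ_div, if_pos h]
    rw [hdiv, Finset.sum_range_succ]
  · rw [if_neg h]
    have hdiv : (m+1)/k = m/k := by rw [Nat.succ_div, if_neg h, add_zero]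
    rw [hdiv, add_zero]

private lemma B_zero : B k 0 = 1 := by
  simp [B, Nat.zero_div]

private lemma L_identity (N : ℕ) (hk : 1 ≤ k) (hN : 1 ≤ N) :
    (N : ℚ) * B k N = (∑ m ∈ Finset.range N, B k m) - (if k ≤ N then B k (N-k) else 0) := by
  induction N, hN using Nat.le_induction with
  | base =>
    rw [Finset.sum_range_one]
    rcases eq_or_lt_of_le hk with h1 | h2
    · rw [← h1, if_pos le_rfl]
      norm_num [B, Finset.sum_range_succ]
    · rw [if_neg (by omega)]
      have h10 : (1:ℕ)/k = 0 := Nat.div_eq_of_lt h2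
      simp [B, h10, B_zero]
  | succ N hN ih =>
    have hsum : ∑ m ∈ Finset.range N, B k m
        = (N:ℚ) * B k N + (if k ≤ N then B k (N-k) else 0) := by linarith [ih]
    rw [Finset.sum_range_succ, hsum, B_succ N hk]
    have key : ((N:ℚ)+1) * (if k ∣ (N+1) then (-(1:ℚ)/k) ^ ((N+1)/k) / (((N+1)/k).factorial : ℚ) else 0)
        = (if k ≤ N then B k (N-k) else 0) - (if k ≤ N+1 then B k (N+1-k) else 0) := by
      have hk0 : (0:ℚ) < k := by exact_mod_cast hk
      by_cases hdvd : k ∣ (N+1)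
      · have hkN1 : k ≤ N+1 := Nat.le_of_dvd (by omega) hdvd
        rw [if_pos hdvd, if_pos hkN1]
        by_cases hkN : k ≤ N
        · rw [if_pos hkN]
          have e1 : N + 1 - k = (N - k) + 1 := by omega
          have hdvd2 : k ∣ (N - k + 1) := by
            have : N - k + 1 = (N + 1) - k := by omega
            rw [this]
            exact Nat.dvd_sub hdvd dvd_rfl
          rw [e1, B_succ (N-k) hk, if_pos hdvd2]
          have hj : (N+1)/k = (N-k+1)/k + 1 := by
            rw [← Nat.add_div_right _ (by omega : 0 < k), show N-k+1+k = N+1 by omega]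
          set j := (N-k+1)/k with hjdef
          have hNj : (N+1 : ℚ) = (k : ℚ) * (j+1) := by
            have h2 := Nat.div_mul_cancel hdvd
            rw [hj] at h2
            have h3 := congrArg (Nat.cast : ℕ → ℚ) h2
            push_cast at h3
            linarith
          rw [hj, pow_succ, Nat.factorial_succ]
          have hfac : ((j.factorial : ℚ)) ≠ 0 := by exact_mod_cast j.factorial_ne_zero
          rw [hNj]
          push_cast
          field_simp
          ring
        · have hkeq : k = N+1 := by omega
          rw [if_neg hkN, hkeq, Nat.sub_self, B_zero, Nat.div_self (by omega), pow_one,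
            Nat.factorial_one]
          have : ((N:ℚ)+1) ≠ 0 := by positivity
          push_cast
          field_simp
          ring
      · rw [if_neg hdvd, mul_zero]
        by_cases hkN : k ≤ N
        · rw [if_pos hkN, if_pos (by omega)]
          have e1 : N + 1 - k = (N - k) + 1 := by omega
          have hdvd2 : ¬ k ∣ (N - k + 1) := by
            intro h
            apply hdvd
            have : N + 1 = (N - k + 1) + k := by omega
            rw [this]
            exact Nat.dvd_add h dvd_rfl
          rw [e1, B_succ (N-k) hk, if_neg hdvd2, add_zero, sub_self]
        · have hk1 : ¬ k ≤ N+1 := by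
            intro h
            have he : k = N+1 := by omega
            exact hdvd (he ▸ dvd_rfl)
          rw [if_neg hkN, if_neg hk1, sub_self]
    push_cast at key ⊢
    linear_combination key

private lemma aa_eq (n : ℕ) (hk : 1 ≤ k) :
    (aa k n : ℚ) = (n.factorial : ℚ) * B k n := by
  induction n using Nat.strong_induction_on with
  | _ n ih =>
    match n with
    | 0 =>
      have h1 : aa k 0 = 1 := by
        rw [aa, noK]
        rw [Finset.filter_true_of_mem (fun π _ => fun x => x.elim0)]
        simp
      rw [h1, B_zero]
      simp
    | (n+1) =>
      rw [rec_lemma n hk, Nat.cast_sum]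
      have step : ∀ ℓ ∈ Finset.Icc 1 (n+1),
          (((if ℓ = k then 0 else n.descFactorial (ℓ-1) * aa k (n+1-ℓ)) : ℕ) : ℚ)
            = if ℓ = k then 0 else (n.factorial : ℚ) * B k (n+1-ℓ) := by
        intro ℓ hℓ
        simp only [Finset.mem_Icc] at hℓ
        by_cases h : ℓ = k
        · simp [h]
        · rw [if_neg h, if_neg h]
          push_cast
          rw [ih (n+1-ℓ) (by omega)]
          have hdf : (n.descFactorial (ℓ-1) : ℚ) * ((n+1-ℓ).factorial : ℚ) = (n.factorial : ℚ) := by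
            have h2 := Nat.factorial_mul_descFactorial (n := n) (k := ℓ-1) (by omega)
            rw [show n - (ℓ-1) = n+1-ℓ by omega] at h2
            exact_mod_cast congrArg (Nat.cast : ℕ → ℚ) (by rw [mul_comm] at h2; exact h2)
          calc (n.descFactorial (ℓ-1) : ℚ) * (((n+1-ℓ).factorial : ℚ) * B k (n+1-ℓ))
              = ((n.descFactorial (ℓ-1) : ℚ) * ((n+1-ℓ).factorial : ℚ)) * B k (n+1-ℓ) := by ring
            _ = (n.factorial : ℚ) * B k (n+1-ℓ) := by rw [hdf]
      rw [Finset.sum_congr rfl step]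
      have split : ∑ ℓ ∈ Finset.Icc 1 (n+1), (if ℓ = k then (0:ℚ) else (n.factorial:ℚ) * B k (n+1-ℓ))
          = (∑ ℓ ∈ Finset.Icc 1 (n+1), (n.factorial:ℚ) * B k (n+1-ℓ))
            - (if k ∈ Finset.Icc 1 (n+1) then (n.factorial:ℚ) * B k (n+1-k) else 0) := by
        rw [← Finset.sum_ite_eq' (Finset.Icc 1 (n+1)) k
            (fun ℓ => (n.factorial:ℚ) * B k (n+1-ℓ)), ← Finset.sum_sub_distrib]
        apply Finset.sum_congr rfl
        intro ℓ _
        by_cases h : ℓ = k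
        · simp [h]
        · simp [h]
      rw [split]
      have reindex : ∑ ℓ ∈ Finset.Icc 1 (n+1), (n.factorial:ℚ) * B k (n+1-ℓ)
          = ∑ m ∈ Finset.range (n+1), (n.factorial:ℚ) * B k m := by
        apply Finset.sum_bij' (fun ℓ _ => n+1-ℓ) (fun m _ => n+1-m)
        · intro ℓ hℓ
          simp only [Finset.mem_Icc] at hℓ
          simp only [Finset.mem_range]
          omega
        · intro m hm
          simp only [Finset.mem_range] at hm
          simp only [Finset.mem_Icc]
          omega
        · intro ℓ hℓ
          simp only [Finset.mem_Icc] at hℓ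
          omega
        · intro m hm
          simp only [Finset.mem_range] at hm
          omega
        · intro ℓ hℓ
          rfl
      rw [reindex, ← Finset.mul_sum]
      have hL := L_identity (k := k) (n+1) hk (by omega)
      have : (if k ∈ Finset.Icc 1 (n+1) then (n.factorial:ℚ) * B k (n+1-k) else 0)
          = (n.factorial:ℚ) * (if k ≤ n+1 then B k (n+1-k) else 0) := by
        by_cases h : k ≤ n+1
        · rw [if_pos (Finset.mem_Icc.mpr ⟨hk, h⟩), if_pos h]
        · rw [if_neg (fun hc => h (Finset.mem_Icc.mp hc).2), if_neg h, mul_zero]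
      rw [this, ← mul_sub, ← hL, Nat.factorial_succ]
      push_cast
      ring

theorem count_no_k_cycle (n k : ℕ) (hk : 1 ≤ k) :
    ({π : Equiv.Perm (Fin n) | ∀ x : Fin n,
        Function.minimalPeriod (⇑π) x ≠ k}.ncard : ℚ) =
      (n.factorial : ℚ) *
        ∑ s ∈ Finset.range (n / k + 1), (-(1 : ℚ) / k) ^ s / (s.factorial : ℚ) := by
  classical
  have h := aa_eq (k := k) n hk
  have h2 : {π : Equiv.Perm (Fin n) | ∀ x : Fin n,
      Function.minimalPeriod (⇑π) x ≠ k}.ncard = aa k n := by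
    rw [Set.ncard_eq_toFinset_card', aa, noK]
    congr 1
    ext π
    simp
  rw [h2, h, B]
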